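/- Let n ≥ 2 be a natural number. The n-th Gelfand number of the Volterra operator V : L¹(0,1) → C[0,1] equals 1/2, i.e., the infimum over all closed subspaces M of L¹(0,1) with codimension < n of sup{‖Vf‖_∞ : f ∈ M, ‖f‖₁ ≤ 1} equals 1/2. -/

import Mathlib

open MeasureTheory

noncomputable section

/-- The space `L¹(0,1)` of Lebesgue integrable functions on `(0,1)`. -/
abbrev L1 : Type := Lp ℝ 1 ((volume : Measure ℝ).restrict (Set.Ioo (0:ℝ) 1))

/-- The space `C[0,1]` of continuous real functions on `[0,1]` with the supremum norm. -/
abbrev C01 : Type := C(Set.Icc (0:ℝ) 1, ℝ)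

/-- `V` is the Volterra operator: `(V f)(t) = ∫₀ᵗ f(s) ds` for `f ∈ L¹(0,1)`. -/
def IsVolterra (V : L1 →L[ℝ] C01) : Prop :=
  ∀ f : L1, ∀ t : Set.Icc (0:ℝ) 1,
    V f t = ∫ s in Set.Ioo (0:ℝ) (t:ℝ), f s
      ∂((volume : Measure ℝ).restrict (Set.Ioo (0:ℝ) 1))

set_option synthInstance.maxHeartbeats 1000000
set_option maxHeartbeats 1000000

namespace VolterraAux

open Set

abbrev μ01 : Measure ℝ := (volume : Measure ℝ).restrict (Set.Ioo (0:ℝ) 1)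

/-! ### Bump functions -/

def ap (k : ℕ) : ℝ := 1/2 - (1/2 : ℝ)^(k+2)
def bp (k : ℕ) : ℝ := 1/2 - (1/2 : ℝ)^(k+3)
def cp (k : ℕ) : ℝ := (2:ℝ)^(k+3)

lemma half_pow_pos (n : ℕ) : (0:ℝ) < (1/2:ℝ)^n := by positivity

lemma ap_pos (k : ℕ) : 0 < ap k := by
  have h : (1/2:ℝ)^(k+2) ≤ (1/2:ℝ)^2 :=
    pow_le_pow_of_le_one (by norm_num) (by norm_num) (by omega)
  unfold ap; norm_num at h ⊢; linarith

lemma ap_lt_bp (k : ℕ) : ap k < bp k := by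
  unfold ap bp
  have : (1/2:ℝ)^(k+3) < (1/2:ℝ)^(k+2) :=
    pow_lt_pow_right_of_lt_one₀ (by norm_num) (by norm_num) (by omega)
  linarith

lemma bp_lt_one (k : ℕ) : bp k < 1 := by
  unfold bp; have := half_pow_pos (k+3); linarith

lemma bp_sub_ap (k : ℕ) : bp k - ap k = (1/2:ℝ)^(k+3) := by
  unfold ap bp
  have : (1/2:ℝ)^(k+3) = (1/2:ℝ)^(k+2) * (1/2) := by rw [pow_succ]
  linarith

lemma bp_le_ap (k l : ℕ) (h : k < l) : bp k ≤ ap l := by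
  unfold ap bp
  have : (1/2:ℝ)^(l+2) ≤ (1/2:ℝ)^(k+3) :=
    pow_le_pow_of_le_one (by norm_num) (by norm_num) (by omega)
  linarith

lemma meas_Ioo {p q : ℝ} (hp : 0 ≤ p) (hq : q ≤ 1) :
    μ01 (Ioo p q) = ENNReal.ofReal (q - p) := by
  rw [Measure.restrict_apply measurableSet_Ioo,
    Set.inter_eq_left.mpr (Ioo_subset_Ioo hp hq), Real.volume_Ioo]

lemma meas_ne_top (k : ℕ) : μ01 (Ioo (ap k) (bp k)) ≠ ⊤ := by
  rw [meas_Ioo (le_of_lt (ap_pos k)) (le_of_lt (bp_lt_one k))]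
  exact ENNReal.ofReal_ne_top

def u (k : ℕ) : L1 := indicatorConstLp 1 measurableSet_Ioo (meas_ne_top k) (cp k)

lemma cp_mul_len (k : ℕ) : cp k * (bp k - ap k) = 1 := by
  rw [bp_sub_ap]; unfold cp
  rw [← mul_pow]; norm_num

lemma norm_u (k : ℕ) : ‖u k‖ = 1 := by
  rw [u, norm_indicatorConstLp one_ne_zero ENNReal.one_ne_top]
  rw [measureReal_def, meas_Ioo (le_of_lt (ap_pos k)) (le_of_lt (bp_lt_one k))]
  rw [ENNReal.toReal_ofReal (by linarith [ap_lt_bp k])]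
  norm_num
  rw [abs_of_pos (by unfold cp; positivity)]
  exact cp_mul_len k

lemma integral_u (k : ℕ) (t : ℝ) :
    ∫ s in Ioo (0:ℝ) t, (u k : ℝ → ℝ) s ∂μ01
      = cp k * (μ01 (Ioo (0:ℝ) t ∩ Ioo (ap k) (bp k))).toReal := by
  rw [show ((u k : ℝ → ℝ))
      = ((indicatorConstLp 1 measurableSet_Ioo (meas_ne_top k) (cp k) : L1) : ℝ → ℝ) from rfl]
  rw [integral_congr_ae ((indicatorConstLp_coeFn (p := 1)).restrict)]
  rw [setIntegral_indicator measurableSet_Ioo]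
  rw [setIntegral_const]
  rw [smul_eq_mul, mul_comm]
  rfl

lemma integral_u_self (k : ℕ) :
    ∫ s in Ioo (0:ℝ) (bp k), (u k : ℝ → ℝ) s ∂μ01 = 1 := by
  rw [integral_u]
  have hsub : Ioo (ap k) (bp k) ⊆ Ioo (0:ℝ) (bp k) :=
    Ioo_subset_Ioo (le_of_lt (ap_pos k)) le_rfl
  rw [Set.inter_eq_right.mpr hsub]
  rw [meas_Ioo (le_of_lt (ap_pos k)) (le_of_lt (bp_lt_one k))]
  rw [ENNReal.toReal_ofReal (by linarith [ap_lt_bp k])]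
  exact cp_mul_len k

lemma integral_u_later (k l : ℕ) (h : k < l) :
    ∫ s in Ioo (0:ℝ) (bp k), (u l : ℝ → ℝ) s ∂μ01 = 0 := by
  rw [integral_u]
  have : Ioo (0:ℝ) (bp k) ∩ Ioo (ap l) (bp l) = ∅ := by
    apply Set.eq_empty_of_forall_notMem
    rintro x ⟨⟨_, hx2⟩, ⟨hx3, _⟩⟩
    have := bp_le_ap k l h
    linarith
  rw [this]
  simp

/-! ### Elementary bounds for the Volterra operator -/

lemma abs_V_apply_le (V : L1 →L[ℝ] C01) (hV : IsVolterra V) (f : L1)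
    (t : Set.Icc (0:ℝ) 1) : |V f t| ≤ ‖f‖ := by
  rw [hV f t]
  calc |∫ s in Ioo (0:ℝ) (t:ℝ), f s ∂μ01|
      ≤ ∫ s in Ioo (0:ℝ) (t:ℝ), ‖f s‖ ∂μ01 := by
        simpa using norm_integral_le_integral_norm
          (μ := μ01.restrict (Ioo (0:ℝ) (t:ℝ))) (f := fun s => f s)
    _ ≤ ∫ s, ‖f s‖ ∂μ01 := setIntegral_le_integral (L1.integrable_coeFn f).norm
        (Filter.Eventually.of_forall fun x => norm_nonneg _)
    _ = ‖f‖ := (L1.norm_eq_integral_norm f).symm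

/-! ### Final arithmetic helper -/

lemma arith_final (C d V0 η : ℝ) (hC0 : 0 ≤ C) (hd0 : 0 ≤ d) (hdη : d ≤ η)
    (hV0 : 1 - d ≤ V0) : 1/2 - η ≤ (2 + d)⁻¹ * V0 := by
  have hpos : (0:ℝ) < 2 + d := by linarith
  have h1 : (1/2 - d) * (2 + d) ≤ 1 - d := by nlinarith
  have h2 : 1/2 - d ≤ (1 - d) / (2 + d) := (le_div_iff₀ hpos).mpr h1
  have h3 : (1 - d) / (2 + d) ≤ (2 + d)⁻¹ * V0 := by
    rw [div_eq_inv_mul]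
    exact mul_le_mul_of_nonneg_left hV0 (inv_nonneg.mpr (le_of_lt hpos))
  linarith

/-! ### The lower bound -/

lemma lower_bound (V : L1 →L[ℝ] C01) (hV : IsVolterra V)
    (M : Submodule ℝ L1) (hM : IsClosed (M : Set L1))
    (hfin : Module.rank ℝ (L1 ⧸ M) < Cardinal.aleph0) (η : ℝ) (hη : 0 < η) :
    ∃ f : L1, f ∈ M ∧ ‖f‖ ≤ 1 ∧ 1/2 - η ≤ ‖V f‖ := by
  haveI : IsClosed (M : Set L1) := hM
  haveI : FiniteDimensional ℝ (L1 ⧸ M) := Module.rank_lt_aleph0_iff.mp hfin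
  set m := Module.finrank ℝ (L1 ⧸ M) with hm
  set B : Module.Basis (Fin m) ℝ (L1 ⧸ M) := Module.finBasis ℝ (L1 ⧸ M) with hB
  set ψ : (L1 ⧸ M) →L[ℝ] (Fin m → ℝ) :=
    LinearMap.toContinuousLinearMap B.equivFun.toLinearMap with hψ
  set π : L1 →L[ℝ] (L1 ⧸ M) :=
    LinearMap.mkContinuous M.mkQ 1 (fun x => by
      simpa using Submodule.Quotient.norm_mk_le M x) with hπ
  set Φ : L1 →L[ℝ] (Fin m → ℝ) := ψ.comp π with hΦ
  have hker : ∀ f : L1, Φ f = 0 ↔ f ∈ M := by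
    intro f
    simp only [hΦ, hψ, hπ, ContinuousLinearMap.comp_apply, LinearMap.mkContinuous_apply]
    rw [LinearMap.coe_toContinuousLinearMap']
    rw [show (B.equivFun.toLinearMap : (L1 ⧸ M) → (Fin m → ℝ)) (M.mkQ f)
        = B.equivFun (M.mkQ f) from rfl]
    rw [LinearEquiv.map_eq_zero_iff]
    rw [show M.mkQ f = Submodule.Quotient.mk f from rfl, Submodule.Quotient.mk_eq_zero]
  -- right inverse with bound
  obtain ⟨ρ₀, hρ₀⟩ := (Φ : L1 →ₗ[ℝ] (Fin m → ℝ)).rangeRestrict.exists_rightInverse_of_surjective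
    (LinearMap.range_eq_top.2 (LinearMap.surjective_rangeRestrict _))
  set ρ : (LinearMap.range (Φ : L1 →ₗ[ℝ] (Fin m → ℝ))) →L[ℝ] L1 :=
    LinearMap.toContinuousLinearMap ρ₀ with hρdef
  have hρ : ∀ x, Φ (ρ x) = (x : Fin m → ℝ) := by
    intro x
    have := congrArg Subtype.val (LinearMap.congr_fun hρ₀ x)
    simp at this; exact this
  obtain ⟨C, hC0, hCb⟩ : ∃ C, 0 ≤ C ∧ ∀ y, ‖ρ y‖ ≤ C * ‖y‖ :=
    ⟨‖ρ‖, norm_nonneg ρ, fun y => ρ.le_opNorm y⟩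
  set δ := η / (C + 1) with hδ
  have hδ0 : 0 < δ := div_pos hη (by linarith)
  have hCδ : C * δ ≤ η := by
    rw [hδ, mul_comm, div_mul_eq_mul_div]
    apply (div_le_iff₀ (by linarith : (0:ℝ) < C+1)).mpr
    nlinarith
  -- find close pair
  set v : ℕ → (Fin m → ℝ) := fun k => Φ (u k) with hv
  have hvb : ∀ k, v k ∈ Metric.closedBall (0 : Fin m → ℝ) ‖Φ‖ := by
    intro k
    rw [Metric.mem_closedBall, dist_zero_right]
    calc ‖Φ (u k)‖ ≤ ‖Φ‖ * ‖u k‖ := Φ.le_opNorm _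
      _ = ‖Φ‖ := by rw [norm_u]; ring
  obtain ⟨x, -, φs, hφs, hconv⟩ := tendsto_subseq_of_bounded
    Metric.isBounded_closedBall hvb
  have hcauchy := hconv.cauchySeq
  rw [Metric.cauchySeq_iff] at hcauchy
  obtain ⟨N, hN⟩ := hcauchy δ hδ0
  set k := φs N with hk
  set l := φs (N+1) with hl
  have hkl : k < l := hφs (by omega)
  have hclose : ‖v k - v l‖ < δ := by
    rw [← dist_eq_norm]
    exact hN N le_rfl (N+1) (by omega)
  -- build the function
  set w : L1 := u k - u l with hw
  have hΦw : Φ w = v k - v l := by rw [hw, map_sub]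
  have hmem : Φ w ∈ LinearMap.range (Φ : L1 →ₗ[ℝ] (Fin m → ℝ)) := ⟨w, rfl⟩
  set h : L1 := ρ ⟨Φ w, hmem⟩ with hh
  have hΦh : Φ h = Φ w := hρ _
  have hnormh : ‖h‖ ≤ C * δ := by
    calc ‖h‖ ≤ C * ‖(⟨Φ w, hmem⟩ : LinearMap.range (Φ : L1 →ₗ[ℝ] (Fin m → ℝ)))‖ :=
          hCb _
      _ = C * ‖Φ w‖ := rfl
      _ ≤ C * δ := by
          apply mul_le_mul_of_nonneg_left _ hC0
          rw [hΦw]; exact le_of_lt hclose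
  set f0 : L1 := w - h with hf0
  have hf0M : f0 ∈ M := by
    rw [← hker]
    rw [hf0, map_sub, hΦh, sub_self]
  have hnf0 : ‖f0‖ ≤ 2 + C * δ := by
    calc ‖f0‖ ≤ ‖w‖ + ‖h‖ := norm_sub_le _ _
      _ ≤ (‖u k‖ + ‖u l‖) + ‖h‖ := by gcongr; exact norm_sub_le _ _
      _ ≤ 2 + C * δ := by rw [norm_u, norm_u]; linarith
  -- value at bp k
  set tpt : Set.Icc (0:ℝ) 1 := ⟨bp k, ⟨by
      have h1 := ap_pos k; have h2 := ap_lt_bp k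
      linarith, le_of_lt (bp_lt_one k)⟩⟩ with htpt
  have hVf0 : (1 : ℝ) - C * δ ≤ V f0 tpt := by
    have e1 : V f0 tpt = V w tpt - V h tpt := by
      rw [hf0, map_sub]; rfl
    have e2 : V w tpt = V (u k) tpt - V (u l) tpt := by
      rw [hw, map_sub]; rfl
    have e3 : V (u k) tpt = 1 := by
      rw [hV (u k) tpt]; exact integral_u_self k
    have e4 : V (u l) tpt = 0 := by
      rw [hV (u l) tpt]; exact integral_u_later k l hkl
    have e5 : |V h tpt| ≤ C * δ := le_trans (abs_V_apply_le V hV h tpt) hnormh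
    rw [e1, e2, e3, e4]
    have := abs_le.mp e5
    linarith [this.1, this.2]
  have hVf0' : 1 - C * δ ≤ ‖V f0‖ := by
    calc (1:ℝ) - C * δ ≤ V f0 tpt := hVf0
      _ ≤ |V f0 tpt| := le_abs_self _
      _ ≤ ‖V f0‖ := by simpa using (V f0).norm_coe_le_norm tpt
  -- scale
  set f : L1 := (2 + C * δ)⁻¹ • f0 with hf
  have hpos : (0:ℝ) < 2 + C * δ := by positivity
  refine ⟨f, M.smul_mem _ hf0M, ?_, ?_⟩
  · rw [hf, norm_smul, norm_inv, Real.norm_eq_abs, abs_of_pos hpos]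
    rw [inv_mul_le_iff₀ hpos, mul_one]
    exact hnf0
  · have e : V f = (2 + C * δ)⁻¹ • V f0 := by
      rw [hf]; exact V.map_smul _ _
    have e2 : ‖V f‖ = (2 + C * δ)⁻¹ * ‖V f0‖ := by
      rw [e, norm_smul ((2 + C * δ)⁻¹) (V f0), norm_inv, Real.norm_eq_abs, abs_of_pos hpos]
    rw [e2]
    exact arith_final C (C*δ) ‖V f0‖ η hC0 (mul_nonneg hC0 (le_of_lt hδ0)) hCδ hVf0'

/-! ### The upper bound: the subspace of mean-zero functions -/

lemma upper_bound (V : L1 →L[ℝ] C01) (hV : IsVolterra V) :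
    ∃ M : Submodule ℝ L1, IsClosed (M : Set L1) ∧
      Module.rank ℝ (L1 ⧸ M) ≤ 1 ∧
      ∀ f : L1, f ∈ M → ‖f‖ ≤ 1 → ‖V f‖ ≤ 1/2 := by
  set one : Set.Icc (0:ℝ) 1 := ⟨1, by norm_num, le_rfl⟩ with hone
  set φ : L1 →L[ℝ] ℝ := (ContinuousMap.evalCLM ℝ one).comp V with hφ
  refine ⟨LinearMap.ker (φ : L1 →ₗ[ℝ] ℝ), ContinuousLinearMap.isClosed_ker φ, ?_, ?_⟩
  · calc Module.rank ℝ (L1 ⧸ LinearMap.ker (φ : L1 →ₗ[ℝ] ℝ))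
        = Module.rank ℝ (LinearMap.range (φ : L1 →ₗ[ℝ] ℝ)) :=
          (LinearMap.quotKerEquivRange (φ : L1 →ₗ[ℝ] ℝ)).rank_eq
      _ ≤ Module.rank ℝ ℝ := Submodule.rank_le _
      _ = 1 := Module.rank_self ℝ
  · intro f hfM hf1
    have hφf : V f one = 0 := hfM
    have htotal : ∫ s, (f : ℝ → ℝ) s ∂μ01 = 0 := by
      have h1 : ∫ s in Ioo (0:ℝ) 1, (f : ℝ → ℝ) s ∂μ01 = ∫ s, (f : ℝ → ℝ) s ∂μ01 := by
        unfold μ01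
        rw [Measure.restrict_restrict measurableSet_Ioo]
        simp
      rw [← h1]
      rw [hV f one] at hφf
      simpa [hone] using hφf
    apply (ContinuousMap.norm_le _ (by norm_num)).2
    intro t
    have hAm : MeasurableSet (Ioo (0:ℝ) (t:ℝ)) := measurableSet_Ioo
    have hsum : (∫ s in Ioo (0:ℝ) (t:ℝ), ‖(f : ℝ → ℝ) s‖ ∂μ01)
        + (∫ s in (Ioo (0:ℝ) (t:ℝ))ᶜ, ‖(f : ℝ → ℝ) s‖ ∂μ01) = ‖f‖ := by
      rw [integral_add_compl hAm (L1.integrable_coeFn f).norm]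
      exact (L1.norm_eq_integral_norm f).symm
    have hsplit : (∫ s in Ioo (0:ℝ) (t:ℝ), (f : ℝ → ℝ) s ∂μ01)
        + (∫ s in (Ioo (0:ℝ) (t:ℝ))ᶜ, (f : ℝ → ℝ) s ∂μ01) = 0 := by
      rw [integral_add_compl hAm (L1.integrable_coeFn f)]
      exact htotal
    have hb1 : |V f t| ≤ ∫ s in Ioo (0:ℝ) (t:ℝ), ‖(f : ℝ → ℝ) s‖ ∂μ01 := by
      rw [hV f t]
      simpa using norm_integral_le_integral_norm
        (μ := μ01.restrict (Ioo (0:ℝ) (t:ℝ))) (f := fun s => (f : ℝ → ℝ) s)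
    have hb2 : |V f t| ≤ ∫ s in (Ioo (0:ℝ) (t:ℝ))ᶜ, ‖(f : ℝ → ℝ) s‖ ∂μ01 := by
      rw [hV f t]
      have heq : ∫ s in Ioo (0:ℝ) (t:ℝ), (f : ℝ → ℝ) s ∂μ01
          = - ∫ s in (Ioo (0:ℝ) (t:ℝ))ᶜ, (f : ℝ → ℝ) s ∂μ01 := by linarith
      rw [heq, abs_neg]
      simpa using norm_integral_le_integral_norm
        (μ := μ01.restrict (Ioo (0:ℝ) (t:ℝ))ᶜ) (f := fun s => (f : ℝ → ℝ) s)
    rw [Real.norm_eq_abs]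
    linarith

end VolterraAux

open VolterraAux in
/-- The `n`-th Gelfand number of the Volterra operator `V : L¹(0,1) → C[0,1]`
equals `1/2` for `n ≥ 2`. -/
theorem gelfand_number_volterra (n : ℕ) (hn : 2 ≤ n)
    (V : L1 →L[ℝ] C01) (hV : IsVolterra V) :
    sInf {r : ℝ | ∃ M : Submodule ℝ L1, IsClosed (M : Set L1) ∧
        Module.rank ℝ (L1 ⧸ M) < (n : Cardinal) ∧
        r = sSup {s : ℝ | ∃ f : L1, f ∈ M ∧ ‖f‖ ≤ 1 ∧ s = ‖V f‖}} = 1 / 2 := by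
  set T := {r : ℝ | ∃ M : Submodule ℝ L1, IsClosed (M : Set L1) ∧
      Module.rank ℝ (L1 ⧸ M) < (n : Cardinal) ∧
      r = sSup {s : ℝ | ∃ f : L1, f ∈ M ∧ ‖f‖ ≤ 1 ∧ s = ‖V f‖}} with hT
  -- every element of T is at least 1/2
  have lower_all : ∀ r ∈ T, 1/2 ≤ r := by
    rintro r ⟨M, hMc, hMr, rfl⟩
    set S := {s : ℝ | ∃ f : L1, f ∈ M ∧ ‖f‖ ≤ 1 ∧ s = ‖V f‖} with hS
    have hbdd : BddAbove S := by
      refine ⟨‖V‖, ?_⟩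
      rintro s ⟨f, hfM, hf1, rfl⟩
      calc ‖V f‖ ≤ ‖V‖ * ‖f‖ := V.le_opNorm f
        _ ≤ ‖V‖ * 1 := mul_le_mul_of_nonneg_left hf1 (norm_nonneg V)
        _ = ‖V‖ := mul_one _
    apply le_of_forall_sub_le
    intro η hη
    obtain ⟨f, hfM, hf1, hVf⟩ := lower_bound V hV M hMc
      (hMr.trans (Cardinal.nat_lt_aleph0 n)) η hη
    exact le_trans hVf (le_csSup hbdd ⟨f, hfM, hf1, rfl⟩)
  -- 1/2 belongs to T
  have half_mem : (1/2 : ℝ) ∈ T := by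
    obtain ⟨M, hMc, hMr, hMhalf⟩ := upper_bound V hV
    have hrank : Module.rank ℝ (L1 ⧸ M) < (n : Cardinal) := by
      calc Module.rank ℝ (L1 ⧸ M) ≤ 1 := hMr
        _ < (n : Cardinal) := by
          have h2 : (1:ℕ) < n := by omega
          exact_mod_cast h2
    refine ⟨M, hMc, hrank, ?_⟩
    set S := {s : ℝ | ∃ f : L1, f ∈ M ∧ ‖f‖ ≤ 1 ∧ s = ‖V f‖} with hS
    have hmem0 : (0:ℝ) ∈ S := ⟨0, M.zero_mem, by simp, by simp⟩
    have hub : ∀ s ∈ S, s ≤ 1/2 := by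
      rintro s ⟨f, hfM, hf1, rfl⟩
      exact hMhalf f hfM hf1
    have hle : sSup S ≤ 1/2 := csSup_le ⟨0, hmem0⟩ hub
    have hge : 1/2 ≤ sSup S := lower_all (sSup S) ⟨M, hMc, hrank, rfl⟩
    linarith
  -- conclude
  apply le_antisymm
  · exact csInf_le ⟨1/2, fun r hr => lower_all r hr⟩ half_mem
  · exact le_csInf ⟨1/2, half_mem⟩ lower_all
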